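/- Define X : SU(2,1) → ℂ by X(g) = −a if the bottom-left entry a of g is nonzero, and X(g) = c (the bottom-right entry) if a = 0. Then for every g ∈ SU(2,1) and every τ ∈ H, X(g) ≠ 0 and the complex number j(g,τ)/X(g) has positive real part. -/

import Mathlib

noncomputable section

open Matrix Complex

/-- The Hermitian form matrix `J`. -/
def Jmat : Matrix (Fin 3) (Fin 3) ℂ := !![0,0,1; 0,1,0; 1,0,0]

/-- The group `SU(2,1)` as a subset of 3×3 complex matrices. -/
def SU21 : Set (Matrix (Fin 3) (Fin 3) ℂ) :=
  {g | g.det = 1 ∧ gᴴ * Jmat * g = Jmat}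

/-- The symmetric space `H = {τ ∈ ℂ² : 2 Re τ₁ + |τ₂|² < 0}`. -/
def UpperH : Set (ℂ × ℂ) := {τ | 2 * τ.1.re + Complex.normSq τ.2 < 0}

/-- The automorphy factor `j(g,τ) = Cτ + D`. -/
def jcocycle (g : Matrix (Fin 3) (Fin 3) ℂ) (τ : ℂ × ℂ) : ℂ :=
  g 2 0 * τ.1 + g 2 1 * τ.2 + g 2 2

/-- The action `g*τ = (Aτ+B)/(Cτ+D)`. -/
def act (g : Matrix (Fin 3) (Fin 3) ℂ) (τ : ℂ × ℂ) : ℂ × ℂ :=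
  ((g 0 0 * τ.1 + g 0 1 * τ.2 + g 0 2) / jcocycle g τ,
   (g 1 0 * τ.1 + g 1 1 * τ.2 + g 1 2) / jcocycle g τ)

/-- The function `X(g)`: minus the bottom-left entry when that is nonzero,
and otherwise the bottom-right entry. -/
def Xfun (g : Matrix (Fin 3) (Fin 3) ℂ) : ℂ :=
  if g 2 0 ≠ 0 then -(g 2 0) else g 2 2

/-- The bottom row of an element of `SU(2,1)` is `J`-isotropic. -/
lemma SU21_bottom_row (g : Matrix (Fin 3) (Fin 3) ℂ) (hJ : gᴴ * Jmat * g = Jmat) :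
    g 2 2 * starRingEnd ℂ (g 2 0) + g 2 1 * starRingEnd ℂ (g 2 1)
      + g 2 0 * starRingEnd ℂ (g 2 2) = 0 := by
  have hJJ : Jmat * Jmat = 1 := by
    ext i j; fin_cases i <;> fin_cases j <;>
      simp [Jmat, Matrix.mul_apply, Fin.sum_univ_three, Matrix.one_apply,
        Matrix.vecHead, Matrix.vecTail]
  have hinv : (Jmat * gᴴ * Jmat) * g = 1 := by
    calc (Jmat * gᴴ * Jmat) * g = Jmat * (gᴴ * Jmat * g) := by
          simp only [Matrix.mul_assoc]
      _ = 1 := by rw [hJ, hJJ]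
  have hinv2 : g * (Jmat * gᴴ * Jmat) = 1 := mul_eq_one_comm.mp hinv
  have hkey : g * Jmat * gᴴ = Jmat := by
    have := congrArg (· * Jmat) hinv2
    simp only [Matrix.mul_assoc, hJJ, Matrix.mul_one, Matrix.one_mul] at this
    simpa [Matrix.mul_assoc] using this
  have h22 := congrFun (congrFun hkey 2) 2
  simp [Matrix.mul_apply, Fin.sum_univ_three, Jmat, Matrix.conjTranspose_apply,
    Matrix.vecHead, Matrix.vecTail] at h22
  linear_combination h22

/-- For `g ∈ SU(2,1)` and `τ ∈ H`, `X(g) ≠ 0` and `j(g,τ)/X(g)` has positive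
real part. -/
theorem Xfun_ne_zero_and_jcocycle_div_Xfun_re_pos
    (g : Matrix (Fin 3) (Fin 3) ℂ) (hg : g ∈ SU21) (τ : ℂ × ℂ) (hτ : τ ∈ UpperH) :
    Xfun g ≠ 0 ∧ 0 < (jcocycle g τ / Xfun g).re := by
  obtain ⟨hdet, hJ⟩ := hg
  have hrow := SU21_bottom_row g hJ
  set a := g 2 0 with ha
  set b := g 2 1 with hb
  set c := g 2 2 with hc
  have hτ' : 2 * τ.1.re + Complex.normSq τ.2 < 0 := hτ
  by_cases haz : a = 0
  · -- a = 0 : then b = 0, c ≠ 0, j = c, X = c.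
    have hb0 : b = 0 := by
      have : b * starRingEnd ℂ b = 0 := by
        simpa [haz] using hrow
      rcases mul_eq_zero.mp this with h | h
      · exact h
      · simpa using congrArg (starRingEnd ℂ) h
    have hc0 : c ≠ 0 := by
      intro hcz
      have hzero : g 2 = 0 := by
        funext j
        fin_cases j
        · simpa using haz
        · simpa using hb0
        · simpa using hcz
      have : g.det = 0 := Matrix.det_eq_zero_of_row_eq_zero 2 (fun j => by
        rw [hzero]; rfl)
      rw [hdet] at this
      exact one_ne_zero this
    have hX : Xfun g = c := by simp [Xfun, ← ha, ← hc, haz]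
    have hj : jcocycle g τ = c := by simp [jcocycle, ← ha, ← hb, ← hc, haz, hb0]
    refine ⟨by rw [hX]; exact hc0, ?_⟩
    rw [hX, hj, div_self hc0]
    norm_num
  · -- a ≠ 0
    have hX : Xfun g = -a := by simp [Xfun, ← ha, haz]
    refine ⟨by rw [hX]; exact neg_ne_zero.mpr haz, ?_⟩
    have hA : 0 < Complex.normSq a := Complex.normSq_pos.mpr haz
    -- real part of row relation
    have hre : 2 * (c * starRingEnd ℂ a).re + Complex.normSq b = 0 := by
      have := congrArg Complex.re hrow
      simp only [Complex.add_re, Complex.mul_conj, Complex.zero_re] at this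
      have hsym : (c * starRingEnd ℂ a).re = (a * starRingEnd ℂ c).re := by
        have : c * starRingEnd ℂ a = starRingEnd ℂ (a * starRingEnd ℂ c) := by
          simp [mul_comm]
        rw [this, Complex.conj_re]
      simp only [Complex.ofReal_re] at this
      linarith [this]
    -- estimate the real part of j * conj a
    have hmain : (jcocycle g τ * starRingEnd ℂ a).re < 0 := by
      have hexp : jcocycle g τ * starRingEnd ℂ a
          = (Complex.normSq a : ℂ) * τ.1 + b * starRingEnd ℂ a * τ.2
            + c * starRingEnd ℂ a := by
        rw [jcocycle, ← ha, ← hb, ← hc]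
        rw [← Complex.mul_conj]
        ring
      rw [hexp]
      simp only [Complex.add_re]
      have hXre : ((Complex.normSq a : ℂ) * τ.1).re = Complex.normSq a * τ.1.re := by
        simp [Complex.re_ofReal_mul]
      have h1 : (b * starRingEnd ℂ a * τ.2).re ≤ ‖b‖ * ‖a‖ * ‖τ.2‖ := by
        calc (b * starRingEnd ℂ a * τ.2).re ≤ ‖b * starRingEnd ℂ a * τ.2‖ :=
              Complex.re_le_norm _
          _ = ‖b‖ * ‖a‖ * ‖τ.2‖ := by
              simp [norm_mul, Complex.norm_conj]
      have hsqa : Complex.normSq a = ‖a‖ ^ 2 := (Complex.sq_norm a).symm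
      have hsqb : Complex.normSq b = ‖b‖ ^ 2 := (Complex.sq_norm b).symm
      have hsqt : Complex.normSq τ.2 = ‖τ.2‖ ^ 2 := (Complex.sq_norm τ.2).symm
      have habs : 0 ≤ (‖b‖ - ‖a‖ * ‖τ.2‖) ^ 2 := sq_nonneg _
      rw [hXre]
      nlinarith [h1, hre, hτ', hA, habs, hsqa, hsqb, hsqt]
    -- convert to the divided form
    have hdiv : (jcocycle g τ / a).re * Complex.normSq a = (jcocycle g τ * starRingEnd ℂ a).re := by
      have : jcocycle g τ * starRingEnd ℂ a = (jcocycle g τ / a) * (Complex.normSq a : ℂ) := by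
        rw [← Complex.mul_conj]
        field_simp
      rw [this]
      simp [Complex.mul_re, Complex.ofReal_re, Complex.ofReal_im]
    have hlt : (jcocycle g τ / a).re < 0 := by
      by_contra h
      push_neg at h
      nlinarith [hdiv, hmain, hA]
    rw [hX, div_neg, Complex.neg_re]
    linarith
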